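/- If P_k(n̂) := P_{k(n)}(n, n̂) ≥ Q(n, n̂) for all unit n̂ (with P, Q as in the stability lemma), then for all nonzero h, ĥ with n = −h^⊥/|h|, n̂ = −ĥ^⊥/|ĥ|: (1/|h|)(Z_k(n)ĥ)·(ĥ − h) ≥ |ĥ|γ(n̂) − |h|γ(n) = γ(−ĥ^⊥) − γ(−h^⊥). -/

import Mathlib

open scoped RealInnerProductSpace
noncomputable section
abbrev E := EuclideanSpace ℝ (Fin 2)
def toE (v : Fin 2 → ℝ) : E := (WithLp.equiv 2 (Fin 2 → ℝ)).symm v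
def toV (p : E) : Fin 2 → ℝ := fun i => p i
/-- clockwise rotation by π/2 : (a,b)^⊥ = (b,-a) -/
def perp (p : E) : E := toE ![p 1, -(p 0)]

/-- symmetrized surface energy matrix Z_k(n) = γ(n)I₂ − n∇γ(n)ᵀ − ∇γ(n)nᵀ + k nnᵀ -/
def Zmat (γ : E → ℝ) (k : ℝ) (n : E) : Matrix (Fin 2) (Fin 2) ℝ :=
  γ n • (1 : Matrix (Fin 2) (Fin 2) ℝ)
    - Matrix.vecMulVec (toV n) (toV (gradient γ n))
    - Matrix.vecMulVec (toV (gradient γ n)) (toV n)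
    + k • Matrix.vecMulVec (toV n) (toV n)

def Paux (γ : E → ℝ) (α : ℝ) (n nh : E) : ℝ :=
  2 * Real.sqrt ((-γ n + 2 * ⟪n, nh⟫ * ⟪gradient γ n, nh⟫ + α * ⟪nh, perp n⟫ ^ 2) * γ n)
def Qaux (γ : E → ℝ) (n nh : E) : ℝ := γ nh + ⟪gradient γ n, nh⟫

lemma inner2 (x y : E) : ⟪x, y⟫ = x 0 * y 0 + x 1 * y 1 := by
  simp [PiLp.inner_apply, Fin.sum_univ_two, RCLike.inner_apply]
  ring

lemma perp_c0 (p : E) : perp p 0 = p 1 := by simp [perp, toE]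
lemma perp_c1 (p : E) : perp p 1 = -(p 0) := by simp [perp, toE]
lemma neg_c (x : E) (i : Fin 2) : (-x) i = -(x i) := rfl
lemma smul_c (c : ℝ) (x : E) (i : Fin 2) : (c • x) i = c * x i := rfl
lemma sub_c (x y : E) (i : Fin 2) : (x - y) i = x i - y i := rfl

lemma perp_norm (p : E) : ‖perp p‖ = ‖p‖ := by
  rw [EuclideanSpace.norm_eq, EuclideanSpace.norm_eq]
  simp [Fin.sum_univ_two, perp, toE, sq_abs, Real.norm_eq_abs]
  ring_nf

lemma norm_sq2 (x : E) : ‖x‖^2 = x 0^2 + x 1^2 := by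
  rw [← real_inner_self_eq_norm_sq, inner2]; ring

lemma euler_lemma (γ : E → ℝ)
    (hhom : ∀ l : ℝ, 0 < l → ∀ p : E, γ (l • p) = l * γ p)
    (hdiff : ∀ p : E, p ≠ 0 → DifferentiableAt ℝ γ p)
    (N : E) (hN : N ≠ 0) : fderiv ℝ γ N N = γ N := by
  have hD : HasFDerivAt γ (fderiv ℝ γ N) N := (hdiff N hN).hasFDerivAt
  have h2 : HasDerivAt (fun t : ℝ => t • N) N 1 := by
    simpa using (hasDerivAt_id (1:ℝ)).smul_const N
  have h1 : HasDerivAt (fun t : ℝ => γ (t • N)) (fderiv ℝ γ N N) 1 := by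
    have hD' : HasFDerivAt γ (fderiv ℝ γ N) ((1:ℝ) • N) := by rwa [one_smul]
    exact hD'.comp_hasDerivAt 1 h2
  have h3 : HasDerivAt (fun t : ℝ => t * γ N) (γ N) 1 := by
    simpa using (hasDerivAt_id (1:ℝ)).mul_const (γ N)
  have h4 : (fun t : ℝ => t * γ N) =ᶠ[nhds (1:ℝ)] (fun t : ℝ => γ (t • N)) := by
    filter_upwards [eventually_gt_nhds (zero_lt_one)] with t ht
    rw [hhom t ht N]
  exact h1.unique (h3.congr_of_eventuallyEq h4.symm)

lemma grad_inner (γ : E → ℝ) (N v : E) : ⟪gradient γ N, v⟫ = fderiv ℝ γ N v := by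
  rw [gradient]
  exact InnerProductSpace.toDual_symm_apply

lemma core (a b A A1 A2 K g0 g1 n0 n1 m0 m1 : ℝ)
    (ha : 0 < a) (hb : 0 < b) (hA : 0 < A) (hA1 : 0 < A1) (hA2 : 0 < A2)
    (hn : n0^2 + n1^2 = 1) (hm : m0^2 + m1^2 = 1)
    (heuler : g0*n0 + g1*n1 = A)
    (hP1 : A1 + (g0*m0 + g1*m1) ≤
      2*Real.sqrt ((-A + 2*(n0*m0 + n1*m1)*(g0*m0 + g1*m1) + K*(m0*n1 - m1*n0)^2)*A))
    (hP2 : A2 - (g0*m0 + g1*m1) ≤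
      2*Real.sqrt ((-A + 2*(n0*m0 + n1*m1)*(g0*m0 + g1*m1) + K*(m0*n1 - m1*n0)^2)*A)) :
    b*A1 - a*A ≤ (1/a) *
      (A*((b*m1)*(b*m1 - a*n1) + (-(b*m0))*(-(b*m0) - (-(a*n0))))
        - (n0*(b*m1 - a*n1) + n1*(-(b*m0) - (-(a*n0))))*(g0*(b*m1) + g1*(-(b*m0)))
        - (g0*(b*m1 - a*n1) + g1*(-(b*m0) - (-(a*n0))))*(n0*(b*m1) + n1*(-(b*m0)))
        + K*(n0*(b*m1) + n1*(-(b*m0)))*(n0*(b*m1 - a*n1) + n1*(-(b*m0) - (-(a*n0))))) := by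
  set B : ℝ := -A + 2*(n0*m0 + n1*m1)*(g0*m0 + g1*m1) + K*(m0*n1 - m1*n0)^2 with hBdef
  set t : ℝ := g0*m0 + g1*m1 with htdef
  set s : ℝ := Real.sqrt (B*A) with hsdef
  by_cases hBA : B*A ≤ 0
  · exfalso
    have hs0 : s = 0 := Real.sqrt_eq_zero_of_nonpos hBA
    rw [hs0] at hP1 hP2
    linarith
  · push_neg at hBA
    have hs2 : s^2 = B*A := Real.sq_sqrt hBA.le
    have hEXPR : (A*((b*m1)*(b*m1 - a*n1) + (-(b*m0))*(-(b*m0) - (-(a*n0))))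
        - (n0*(b*m1 - a*n1) + n1*(-(b*m0) - (-(a*n0))))*(g0*(b*m1) + g1*(-(b*m0)))
        - (g0*(b*m1 - a*n1) + g1*(-(b*m0) - (-(a*n0))))*(n0*(b*m1) + n1*(-(b*m0)))
        + K*(n0*(b*m1) + n1*(-(b*m0)))*(n0*(b*m1 - a*n1) + n1*(-(b*m0) - (-(a*n0)))))
        = b^2*B - a*b*t := by
      rw [hBdef, htdef]
      linear_combination (-(b^2*A)) * hm + (-2*b^2*(m0^2+m1^2) + a*b*(n0*m0+n1*m1)) * heuler
        + (-(a*b*(g0*m0+g1*m1))) * hn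
    rw [hEXPR, one_div, ← div_eq_inv_mul, le_div_iff₀ ha]
    have hs3 : b^2*s^2 = b^2*(B*A) := by rw [hs2]
    have key2 : ((b*A1 - a*A)*a)*A ≤ (b^2*B - a*b*t)*A := by
      nlinarith [hs3, sq_nonneg (b*s - a*A), mul_le_mul_of_nonneg_left hP1 (mul_pos ha hb).le, hA]
    exact le_of_mul_le_mul_right key2 hA

/-- If P ≥ Q on unit vectors then the discrete stability inequality holds. -/
theorem PQ_implies_stability (γ : E → ℝ)
    (hhom : ∀ l : ℝ, 0 < l → ∀ p : E, γ (l • p) = l * γ p)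
    (hdiff : ∀ p : E, p ≠ 0 → DifferentiableAt ℝ γ p)
    (hpos : ∀ n : E, ‖n‖ = 1 → 0 < γ n)
    (k : E → ℝ)
    (hPQ : ∀ n nh : E, ‖n‖ = 1 → ‖nh‖ = 1 → Qaux γ n nh ≤ Paux γ (k n) n nh)
    (h hh : E) (hh0 : h ≠ 0) (hhh0 : hh ≠ 0) :
    (‖hh‖ * γ (‖hh‖⁻¹ • (-perp hh)) - ‖h‖ * γ (‖h‖⁻¹ • (-perp h))
        ≤ (1 / ‖h‖) * ⟪toE ((Zmat γ (k (‖h‖⁻¹ • (-perp h))) (‖h‖⁻¹ • (-perp h))).mulVec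
            (toV hh)), hh - h⟫) ∧
    ‖hh‖ * γ (‖hh‖⁻¹ • (-perp hh)) - ‖h‖ * γ (‖h‖⁻¹ • (-perp h))
        = γ (-perp hh) - γ (-perp h) := by
  have ha : (0:ℝ) < ‖h‖ := norm_pos_iff.mpr hh0
  have hb : (0:ℝ) < ‖hh‖ := norm_pos_iff.mpr hhh0
  have homog : ∀ p : E, p ≠ 0 → ‖p‖ * γ (‖p‖⁻¹ • (-perp p)) = γ (-perp p) := by
    intro p hp
    have hp' : (0:ℝ) < ‖p‖ := norm_pos_iff.mpr hp
    rw [← hhom ‖p‖ hp' _, smul_smul, mul_inv_cancel₀ (ne_of_gt hp'), one_smul]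
  constructor
  · set N : E := ‖h‖⁻¹ • (-perp h) with hNdef
    set M : E := ‖hh‖⁻¹ • (-perp hh) with hMdef
    have hN1 : ‖N‖ = 1 := by
      rw [hNdef, norm_smul, norm_neg, perp_norm, Real.norm_eq_abs,
        abs_of_pos (inv_pos.mpr ha), inv_mul_cancel₀ ha.ne']
    have hM1 : ‖M‖ = 1 := by
      rw [hMdef, norm_smul, norm_neg, perp_norm, Real.norm_eq_abs,
        abs_of_pos (inv_pos.mpr hb), inv_mul_cancel₀ hb.ne']
    have hM2 : ‖-M‖ = 1 := by rw [norm_neg]; exact hM1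
    have hN0 : N ≠ 0 := by
      intro h0; rw [h0, norm_zero] at hN1; norm_num at hN1
    have hA : 0 < γ N := hpos N hN1
    have hA1 : 0 < γ M := hpos M hM1
    have hA2 : 0 < γ (-M) := hpos (-M) hM2
    have hn : N 0^2 + N 1^2 = 1 := by rw [← norm_sq2, hN1]; norm_num
    have hm : M 0^2 + M 1^2 = 1 := by rw [← norm_sq2, hM1]; norm_num
    have heuler : gradient γ N 0 * N 0 + gradient γ N 1 * N 1 = γ N := by
      rw [← inner2, grad_inner, euler_lemma γ hhom hdiff N hN0]
    have hcomp0 : h 0 = ‖h‖ * N 1 := by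
      rw [hNdef, smul_c, neg_c, perp_c1]
      field_simp
    have hcomp1 : h 1 = -(‖h‖ * N 0) := by
      rw [hNdef, smul_c, neg_c, perp_c0]
      field_simp
    have hcomp0' : hh 0 = ‖hh‖ * M 1 := by
      rw [hMdef, smul_c, neg_c, perp_c1]
      field_simp
    have hcomp1' : hh 1 = -(‖hh‖ * M 0) := by
      rw [hMdef, smul_c, neg_c, perp_c0]
      field_simp
    have hP1 : γ M + (gradient γ N 0 * M 0 + gradient γ N 1 * M 1) ≤
        2*Real.sqrt ((-γ N + 2*(N 0*M 0 + N 1*M 1)*(gradient γ N 0*M 0 + gradient γ N 1*M 1)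
          + (k N)*(M 0*N 1 - M 1*N 0)^2)*γ N) := by
      have h0 := hPQ N M hN1 hM1
      simp only [Qaux, Paux, inner2, perp_c0, perp_c1] at h0
      ring_nf at h0 ⊢
      exact h0
    have hP2 : γ (-M) - (gradient γ N 0 * M 0 + gradient γ N 1 * M 1) ≤
        2*Real.sqrt ((-γ N + 2*(N 0*M 0 + N 1*M 1)*(gradient γ N 0*M 0 + gradient γ N 1*M 1)
          + (k N)*(M 0*N 1 - M 1*N 0)^2)*γ N) := by
      have h0 := hPQ N (-M) hN1 hM2
      simp only [Qaux, Paux, inner2, perp_c0, perp_c1, neg_c] at h0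
      ring_nf at h0 ⊢
      exact h0
    have hIP : ⟪toE ((Zmat γ (k N) N).mulVec (toV hh)), hh - h⟫ =
        γ N*((hh 0)*(hh 0 - h 0) + (hh 1)*(hh 1 - h 1))
        - (N 0*(hh 0 - h 0) + N 1*(hh 1 - h 1))*(gradient γ N 0*(hh 0) + gradient γ N 1*(hh 1))
        - (gradient γ N 0*(hh 0 - h 0) + gradient γ N 1*(hh 1 - h 1))*(N 0*(hh 0) + N 1*(hh 1))
        + (k N)*(N 0*(hh 0) + N 1*(hh 1))*(N 0*(hh 0 - h 0) + N 1*(hh 1 - h 1)) := by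
      rw [inner2]
      simp only [toE, toV, WithLp.equiv_symm_apply, PiLp.toLp_apply, Zmat, Matrix.mulVec, dotProduct,
        Fin.sum_univ_two, Matrix.sub_apply, Matrix.add_apply, Matrix.smul_apply,
        Matrix.vecMulVec_apply, Matrix.one_apply, sub_c, smul_eq_mul]
      norm_num
      ring
    rw [hIP, hcomp0, hcomp1, hcomp0', hcomp1']
    exact core ‖h‖ ‖hh‖ (γ N) (γ M) (γ (-M)) (k N) (gradient γ N 0) (gradient γ N 1)
      (N 0) (N 1) (M 0) (M 1) ha hb hA hA1 hA2 hn hm heuler hP1 hP2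
  · rw [homog hh hhh0, homog h hh0]
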